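/- Define the quadratic forms Q₁ := −2u² − 2uv + 4uw − 2v² + 6vw − 5w², Q₂ := 10uv − 20uw + 5v² − 20vw + 20w², Q₃ := −48u² − 48uv + 96uw − 20v² + 88vw − 92w² on ℝ³. Let ℝP¹ be the quotient topological space of ℝ²∖{0} by the scaling action of ℝ∖{0}, and let S₁ := { [t₀ : t₁] ∈ ℝP¹ : ∃ (u,v,w) ∈ ℝ³∖{0}, t₀²Q₁(u,v,w) + 2t₀t₁Q₂(u,v,w) + t₁²Q₃(u,v,w) ≥ 0 }. Then S₁ has exactly three connected components. (Consequently the real locus Y(ℝ) of the associated double cover has exactly three connected components; in this example the real isotopy class of the discriminant quartic Δ is three ovals.) -/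

import Mathlib

/-- The scaling relation on nonzero vectors of `ℝⁿ`. -/
def projRel (n : ℕ) (v w : {x : Fin n → ℝ // x ≠ 0}) : Prop :=
  ∃ c : ℝ, c ≠ 0 ∧ c • (v : Fin n → ℝ) = (w : Fin n → ℝ)

/-- The real projective space `ℝPⁿ⁻¹`, as the quotient topological space of `ℝⁿ ∖ {0}` by the
scaling action of `ℝ ∖ {0}`. -/
def RP (n : ℕ) : Type := Quot (projRel n)

instance (n : ℕ) : TopologicalSpace (RP n) :=
  inferInstanceAs (TopologicalSpace (Quot (projRel n)))

/-- `Q₁ = −2u² − 2uv + 4uw − 2v² + 6vw − 5w²`. -/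
def Q₁ (u v w : ℝ) : ℝ :=
  -2 * u ^ 2 - 2 * u * v + 4 * u * w - 2 * v ^ 2 + 6 * v * w - 5 * w ^ 2

/-- `Q₂ = 10uv − 20uw + 5v² − 20vw + 20w²`. -/
def Q₂ (u v w : ℝ) : ℝ :=
  10 * u * v - 20 * u * w + 5 * v ^ 2 - 20 * v * w + 20 * w ^ 2

/-- `Q₃ = −48u² − 48uv + 96uw − 20v² + 88vw − 92w²`. -/
def Q₃ (u v w : ℝ) : ℝ :=
  -48 * u ^ 2 - 48 * u * v + 96 * u * w - 20 * v ^ 2 + 88 * v * w - 92 * w ^ 2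

set_option linter.unusedVariables false

namespace ThreeOvals


/-- The negated determinant of the pencil. -/
def pd (a b : ℝ) : ℝ := (a^2 - 36*b^2) * (a^2 - 16*b^2) * (a^2 - 4*b^2)

lemma D2_pos {a b : ℝ} (h : ¬(a = 0 ∧ b = 0)) :
    0 < 3*a^4 - 12*a^2*b^2 + 384*b^4 := by
  rcases eq_or_ne b 0 with hb | hb
  · subst hb
    have ha : a ≠ 0 := fun h' => h ⟨h', rfl⟩
    have : 0 < a^4 := by positivity
    nlinarith
  · have : 0 < b^4 := by positivity
    nlinarith [sq_nonneg (a^2 - 2*b^2)]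

lemma D1_neg {a b : ℝ} (h : ¬(a = 0 ∧ b = 0)) : -2*a^2 - 48*b^2 < 0 := by
  rcases eq_or_ne b 0 with hb | hb
  · subst hb
    have ha : a ≠ 0 := fun h' => h ⟨h', rfl⟩
    have : 0 < a^2 := by positivity
    nlinarith
  · have : 0 < b^2 := by positivity
    nlinarith [sq_nonneg a]

/-- Abstract completing-the-squares argument. -/
lemma neg_def_aux {D1 D2 D3 q X Y w : ℝ} (hD1 : D1 < 0) (hD2 : 0 < D2) (hD3 : D3 < 0)
    (key : D1 * D2 * q = D2 * X^2 + Y^2 + D1 * D3 * w^2) (hq : 0 ≤ q) :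
    X = 0 ∧ Y = 0 ∧ w = 0 := by
  have hDD : D1 * D2 < 0 := mul_neg_of_neg_of_pos hD1 hD2
  have hL : D1 * D2 * q ≤ 0 := mul_nonpos_iff.mpr (Or.inr ⟨hDD.le, hq⟩)
  have h13 : 0 < D1 * D3 := mul_pos_of_neg_of_neg hD1 hD3
  have h1 : 0 ≤ D2 * X^2 := mul_nonneg hD2.le (sq_nonneg X)
  have h2 : 0 ≤ Y^2 := sq_nonneg Y
  have h3 : 0 ≤ D1 * D3 * w^2 := mul_nonneg h13.le (sq_nonneg w)
  refine ⟨?_, ?_, ?_⟩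
  · by_contra hX
    have : 0 < X^2 := by positivity
    nlinarith [mul_pos hD2 this]
  · by_contra hY
    have : 0 < Y^2 := by positivity
    nlinarith
  · by_contra hw
    have : 0 < w^2 := by positivity
    nlinarith [mul_pos h13 this]

/-- Characterization: the pencil form takes a nonnegative value on a nonzero vector
iff the (negated) determinant is nonpositive. -/
lemma exists_iff {a b : ℝ} (h : ¬(a = 0 ∧ b = 0)) :
    (∃ u v w : ℝ, (u, v, w) ≠ (0, 0, 0) ∧
        0 ≤ a ^ 2 * Q₁ u v w + 2 * a * b * Q₂ u v w + b ^ 2 * Q₃ u v w)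
      ↔ pd a b ≤ 0 := by
  constructor
  · rintro ⟨u, v, w, hne, hq⟩
    by_contra hp
    push_neg at hp
    have hD1 := D1_neg h
    have hD2 := D2_pos h
    have hD3 : -(pd a b) < 0 := by linarith
    have key : (-2*a^2 - 48*b^2) * (3*a^4 - 12*a^2*b^2 + 384*b^4) *
          (a ^ 2 * Q₁ u v w + 2 * a * b * Q₂ u v w + b ^ 2 * Q₃ u v w)
        = (3*a^4 - 12*a^2*b^2 + 384*b^4) *
            ((-2*a^2 - 48*b^2)*u + (-a^2 + 10*a*b - 24*b^2)*v + (2*a^2 - 20*a*b + 48*b^2)*w)^2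
          + ((3*a^4 - 12*a^2*b^2 + 384*b^4)*v
              + ((-2*a^2 - 48*b^2)*(3*a^2 - 20*a*b + 44*b^2)
                 - (-a^2 + 10*a*b - 24*b^2)*(2*a^2 - 20*a*b + 48*b^2))*w)^2
          + (-2*a^2 - 48*b^2) * (-(pd a b)) * w^2 := by
      simp only [Q₁, Q₂, Q₃, pd]; ring
    obtain ⟨hX, hY, hw⟩ := neg_def_aux hD1 hD2 hD3 key hq
    have hv : v = 0 := by
      rw [hw] at hY
      have : (3*a^4 - 12*a^2*b^2 + 384*b^4) * v = 0 := by linarith [hY]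
      rcases mul_eq_zero.mp this with h' | h'
      · exact absurd h' (ne_of_gt hD2)
      · exact h'
    have hu : u = 0 := by
      rw [hw, hv] at hX
      have : (-2*a^2 - 48*b^2) * u = 0 := by linarith [hX]
      rcases mul_eq_zero.mp this with h' | h'
      · exact absurd h' (ne_of_lt hD1)
      · exact h'
    exact hne (by rw [hu, hv, hw])
  · intro hpd
    refine ⟨(-a^2 + 10*a*b - 24*b^2)*(3*a^2 - 20*a*b + 44*b^2)
              - (-2*a^2 + 10*a*b - 20*b^2)*(2*a^2 - 20*a*b + 48*b^2),
            (-a^2 + 10*a*b - 24*b^2)*(2*a^2 - 20*a*b + 48*b^2)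
              - (-2*a^2 - 48*b^2)*(3*a^2 - 20*a*b + 44*b^2),
            3*a^4 - 12*a^2*b^2 + 384*b^4, ?_, ?_⟩
    · intro hq
      have h3 := congrArg (fun p => p.2.2) hq
      simp only at h3
      exact absurd h3 (ne_of_gt (D2_pos h))
    · have hval : a ^ 2 * Q₁ ((-a^2 + 10*a*b - 24*b^2)*(3*a^2 - 20*a*b + 44*b^2)
              - (-2*a^2 + 10*a*b - 20*b^2)*(2*a^2 - 20*a*b + 48*b^2))
            ((-a^2 + 10*a*b - 24*b^2)*(2*a^2 - 20*a*b + 48*b^2)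
              - (-2*a^2 - 48*b^2)*(3*a^2 - 20*a*b + 44*b^2))
            (3*a^4 - 12*a^2*b^2 + 384*b^4)
          + 2 * a * b * Q₂ ((-a^2 + 10*a*b - 24*b^2)*(3*a^2 - 20*a*b + 44*b^2)
              - (-2*a^2 + 10*a*b - 20*b^2)*(2*a^2 - 20*a*b + 48*b^2))
            ((-a^2 + 10*a*b - 24*b^2)*(2*a^2 - 20*a*b + 48*b^2)
              - (-2*a^2 - 48*b^2)*(3*a^2 - 20*a*b + 44*b^2))
            (3*a^4 - 12*a^2*b^2 + 384*b^4)
          + b ^ 2 * Q₃ ((-a^2 + 10*a*b - 24*b^2)*(3*a^2 - 20*a*b + 44*b^2)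
              - (-2*a^2 + 10*a*b - 20*b^2)*(2*a^2 - 20*a*b + 48*b^2))
            ((-a^2 + 10*a*b - 24*b^2)*(2*a^2 - 20*a*b + 48*b^2)
              - (-2*a^2 - 48*b^2)*(3*a^2 - 20*a*b + 44*b^2))
            (3*a^4 - 12*a^2*b^2 + 384*b^4)
          = (3*a^4 - 12*a^2*b^2 + 384*b^4) * (-(pd a b)) := by
        simp only [Q₁, Q₂, Q₃, pd]; ring
      rw [hval]
      exact mul_nonneg (D2_pos h).le (by linarith)



lemma mid16 {a b : ℝ} (hpd : pd a b ≤ 0) (h4 : 4*b^2 < a^2) : 16*b^2 ≤ a^2 := by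
  by_contra h
  push_neg at h
  have h36 : a^2 < 36*b^2 := by linarith
  have hpos : 0 < (36*b^2 - a^2) * (16*b^2 - a^2) * (a^2 - 4*b^2) :=
    mul_pos (mul_pos (by linarith) (by linarith)) (by linarith)
  have he : (36*b^2 - a^2) * (16*b^2 - a^2) * (a^2 - 4*b^2) = pd a b := by
    unfold pd; ring
  linarith [he ▸ hpos]

lemma mid36 {a b : ℝ} (hpd : pd a b ≤ 0) (h4 : 4*b^2 < a^2) : a^2 ≤ 36*b^2 := by
  by_contra h
  push_neg at h
  have hpos : 0 < (a^2 - 36*b^2) * (a^2 - 16*b^2) * (a^2 - 4*b^2) :=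
    mul_pos (mul_pos (by linarith) (by linarith)) (by linarith)
  have he : (a^2 - 36*b^2) * (a^2 - 16*b^2) * (a^2 - 4*b^2) = pd a b := rfl
  linarith [he ▸ hpos]

lemma strict9 {a b : ℝ} (hnz : ¬(a = 0 ∧ b = 0)) (hpd : pd a b ≤ 0)
    (h9 : 9*b^2 ≤ a^2) : 9*b^2 < a^2 := by
  rcases eq_or_ne b 0 with hb | hb
  · have ha : a ≠ 0 := fun h' => hnz ⟨h', hb⟩
    have : 0 < a^2 := by positivity
    rw [hb]; linarith
  · refine lt_of_le_of_ne h9 fun he => ?_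
    have he' : a^2 = 9*b^2 := he.symm
    have : pd a b = (9*b^2 - 36*b^2) * (9*b^2 - 16*b^2) * (9*b^2 - 4*b^2) := by
      unfold pd; rw [he']
    have h2 : pd a b = 945 * b^6 := by rw [this]; ring
    have : 0 < (945 : ℝ) * b^6 := by positivity
    linarith [h2 ▸ hpd]

/-- The basic facts on the middle arcs. -/
lemma arc_facts {a b : ℝ} (hnz : ¬(a = 0 ∧ b = 0)) (hpd : pd a b ≤ 0)
    (h9 : 9*b^2 ≤ a^2) :
    16*b^2 ≤ a^2 ∧ a^2 ≤ 36*b^2 ∧ a ≠ 0 ∧ b ≠ 0 := by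
  have h9' := strict9 hnz hpd h9
  have hb : b ≠ 0 := by
    intro hb0
    rcases eq_or_ne a 0 with ha | ha
    · exact hnz ⟨ha, hb0⟩
    · have h1 : 0 < a^2 := by positivity
      have h2 : pd a b = (a^2)^3 := by unfold pd; rw [hb0]; ring
      have : 0 < (a^2)^3 := by positivity
      linarith [h2 ▸ hpd]
  have hb2 : 0 < b^2 := by positivity
  have h4 : 4*b^2 < a^2 := by linarith
  have h16 := mid16 hpd h4
  have h36 := mid36 hpd h4
  have ha : a ≠ 0 := by
    intro h0
    rw [h0] at h16
    nlinarith
  exact ⟨h16, h36, ha, hb⟩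

lemma eight_pos {a b : ℝ} (h36 : a^2 ≤ 36*b^2) (ha : a ≠ 0) (hb : b ≠ 0)
    (hab : 0 < a*b) : a^2 < 8*(a*b) := by
  have h1 : 0 < a^2*b^2 := by positivity
  refine lt_of_pow_lt_pow_left₀ 2 (by positivity) ?_
  nlinarith

lemma eight_neg' {a b : ℝ} (h36 : a^2 ≤ 36*b^2) (ha : a ≠ 0) (hb : b ≠ 0)
    (hab : a*b < 0) : 8*(a*b) < -(a^2) := by
  have h1 : 0 < a^2*b^2 := by positivity
  have : a^2 < -(8*(a*b)) := by
    refine lt_of_pow_lt_pow_left₀ 2 (by linarith) ?_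
    nlinarith
  linarith


abbrev NZ := {x : Fin 2 → ℝ // x ≠ 0}

lemma coords_ne (t : NZ) : ¬(t.1 0 = 0 ∧ t.1 1 = 0) := by
  rintro ⟨h0, h1⟩
  apply t.2
  funext i
  fin_cases i
  · simpa using h0
  · simpa using h1

lemma vec_ne {a b : ℝ} (h : ¬(a = 0 ∧ b = 0)) : ![a, b] ≠ (0 : Fin 2 → ℝ) := by
  intro hz
  exact h ⟨by simpa using congrFun hz 0, by simpa using congrFun hz 1⟩

lemma coord_smul {v w : NZ} (h : projRel 2 v w) :
    ∃ c : ℝ, c ≠ 0 ∧ w.1 0 = c * v.1 0 ∧ w.1 1 = c * v.1 1 := by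
  obtain ⟨c, hc, hcv⟩ := h
  exact ⟨c, hc, by rw [← hcv]; simp, by rw [← hcv]; simp⟩

/-- The classifying function to `Fin 3`. -/
noncomputable def cls (t : NZ) : Fin 3 :=
  if (t.1 0)^2 < 9*(t.1 1)^2 then 0
  else if (t.1 0)^2 < 8*(t.1 0)*(t.1 1) then 1 else 2

def p0 (t : NZ) : Prop := (t.1 0)^2 < 9*(t.1 1)^2
def p1 (t : NZ) : Prop := 9*(t.1 1)^2 < (t.1 0)^2 ∧ (t.1 0)^2 < 8*(t.1 0)*(t.1 1)
def p2 (t : NZ) : Prop := 9*(t.1 1)^2 < (t.1 0)^2 ∧ 8*(t.1 0)*(t.1 1) < -((t.1 0)^2)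

lemma iff0 {v w : NZ} (h : projRel 2 v w) : p0 v ↔ p0 w := by
  obtain ⟨c, hc, h0, h1⟩ := coord_smul h
  have hc2 : (0:ℝ) < c^2 := by positivity
  unfold p0
  rw [h0, h1,
    show (c * v.1 0)^2 = c^2 * (v.1 0)^2 from by ring,
    show 9*(c * v.1 1)^2 = c^2 * (9*(v.1 1)^2) from by ring,
    mul_lt_mul_iff_right₀ hc2]

lemma iff1 {v w : NZ} (h : projRel 2 v w) : p1 v ↔ p1 w := by
  obtain ⟨c, hc, h0, h1⟩ := coord_smul h
  have hc2 : (0:ℝ) < c^2 := by positivity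
  unfold p1
  rw [h0, h1,
    show (c * v.1 0)^2 = c^2 * (v.1 0)^2 from by ring,
    show 9*(c * v.1 1)^2 = c^2 * (9*(v.1 1)^2) from by ring,
    show 8*(c * v.1 0)*(c * v.1 1) = c^2 * (8*(v.1 0)*(v.1 1)) from by ring,
    mul_lt_mul_iff_right₀ hc2, mul_lt_mul_iff_right₀ hc2]

lemma iff2 {v w : NZ} (h : projRel 2 v w) : p2 v ↔ p2 w := by
  obtain ⟨c, hc, h0, h1⟩ := coord_smul h
  have hc2 : (0:ℝ) < c^2 := by positivity
  unfold p2
  rw [h0, h1,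
    show (c * v.1 0)^2 = c^2 * (v.1 0)^2 from by ring,
    show 9*(c * v.1 1)^2 = c^2 * (9*(v.1 1)^2) from by ring,
    show 8*(c * v.1 0)*(c * v.1 1) = c^2 * (8*(v.1 0)*(v.1 1)) from by ring,
    show -(c^2 * (v.1 0)^2) = c^2 * (-((v.1 0)^2)) from by ring,
    mul_lt_mul_iff_right₀ hc2, mul_lt_mul_iff_right₀ hc2]

lemma cls_respects : ∀ v w, projRel 2 v w → cls v = cls w := by
  intro v w h
  obtain ⟨c, hc, h0, h1⟩ := coord_smul h
  have hc2 : (0:ℝ) < c^2 := by positivity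
  unfold cls
  rw [h0, h1,
    show (c * v.1 0)^2 = c^2 * (v.1 0)^2 from by ring,
    show 9*(c * v.1 1)^2 = c^2 * (9*(v.1 1)^2) from by ring,
    show 8*(c * v.1 0)*(c * v.1 1) = c^2 * (8*(v.1 0)*(v.1 1)) from by ring]
  simp only [mul_lt_mul_iff_right₀ hc2]

/-- The classifying function descends to `ℝP¹`. -/
noncomputable def Fc : RP 2 → Fin 3 := Quot.lift cls cls_respects

def U0 : Set (RP 2) := Quot.lift p0 (fun v w h => propext (iff0 h))
def U1 : Set (RP 2) := Quot.lift p1 (fun v w h => propext (iff1 h))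
def U2 : Set (RP 2) := Quot.lift p2 (fun v w h => propext (iff2 h))

lemma c0 : Continuous fun t : NZ => t.1 0 := (continuous_apply 0).comp continuous_subtype_val
lemma c1 : Continuous fun t : NZ => t.1 1 := (continuous_apply 1).comp continuous_subtype_val

lemma qm : Topology.IsQuotientMap (Quot.mk (projRel 2) : NZ → RP 2) := isQuotientMap_quot_mk

lemma isOpen_U0 : IsOpen U0 := by
  refine qm.isOpen_preimage.mp ?_
  show IsOpen {t : NZ | (t.1 0)^2 < 9*(t.1 1)^2}
  exact isOpen_lt (c0.pow 2) (continuous_const.mul (c1.pow 2))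

lemma isOpen_U1 : IsOpen U1 := by
  refine qm.isOpen_preimage.mp ?_
  show IsOpen ({t : NZ | 9*(t.1 1)^2 < (t.1 0)^2} ∩ {t : NZ | (t.1 0)^2 < 8*(t.1 0)*(t.1 1)})
  exact (isOpen_lt (continuous_const.mul (c1.pow 2)) (c0.pow 2)).inter
    (isOpen_lt (c0.pow 2) ((continuous_const.mul c0).mul c1))

lemma isOpen_U2 : IsOpen U2 := by
  refine qm.isOpen_preimage.mp ?_
  show IsOpen ({t : NZ | 9*(t.1 1)^2 < (t.1 0)^2} ∩ {t : NZ | 8*(t.1 0)*(t.1 1) < -((t.1 0)^2)})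
  exact (isOpen_lt (continuous_const.mul (c1.pow 2)) (c0.pow 2)).inter
    (isOpen_lt ((continuous_const.mul c0).mul c1) (c0.pow 2).neg)

/-- `s ↦ [1 : s]`. -/
def lineMap (s : ℝ) : RP 2 := Quot.mk _ ⟨![1, s], vec_ne (by norm_num)⟩
/-- `r ↦ [r : 1]`. -/
def lineMap' (r : ℝ) : RP 2 := Quot.mk _ ⟨![r, 1], vec_ne (by norm_num)⟩

lemma cont_lineMap : Continuous lineMap := by
  apply Continuous.comp continuous_quot_mk
  apply Continuous.subtype_mk
  apply continuous_pi
  intro i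
  fin_cases i
  · simpa using continuous_const
  · simpa using continuous_id'

lemma cont_lineMap' : Continuous lineMap' := by
  apply Continuous.comp continuous_quot_mk
  apply Continuous.subtype_mk
  apply continuous_pi
  intro i
  fin_cases i
  · simpa using continuous_id'
  · simpa using continuous_const


def sp (t : NZ) : Prop := pd (t.1 0) (t.1 1) ≤ 0

/-- The image set `S₁`, described by the determinant condition. -/
def Sset : Set (RP 2) := {x | ∃ t : NZ, Quot.mk (projRel 2) t = x ∧ sp t}

lemma cls_eq_zero_iff (t : NZ) : cls t = 0 ↔ p0 t := by
  unfold cls p0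
  split_ifs with h1 h2
  · exact iff_of_true rfl h1
  · exact iff_of_false (by decide) h1
  · exact iff_of_false (by decide) h1

lemma cls_eq_one_iff (t : NZ) (hsp : sp t) : cls t = 1 ↔ p1 t := by
  have hnz := coords_ne t
  unfold cls p1
  split_ifs with h1 h2
  · exact iff_of_false (by decide) fun hp => lt_asymm h1 hp.1
  · exact iff_of_true rfl ⟨strict9 hnz hsp (not_lt.mp h1), h2⟩
  · exact iff_of_false (by decide) fun hp => h2 hp.2

lemma cls_eq_two_iff (t : NZ) (hsp : sp t) : cls t = 2 ↔ p2 t := by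
  have hnz := coords_ne t
  unfold cls p2
  split_ifs with h1 h2
  · exact iff_of_false (by decide) fun hp => lt_asymm h1 hp.1
  · exact iff_of_false (by decide) fun hp => by nlinarith [hp.2, h2, sq_nonneg (t.1 0)]
  · have h9 := strict9 hnz hsp (not_lt.mp h1)
    obtain ⟨h16, h36, ha, hb⟩ := arc_facts hnz hsp (not_lt.mp h1)
    have habne : t.1 0 * t.1 1 ≠ 0 := mul_ne_zero ha hb
    have habneg : t.1 0 * t.1 1 < 0 := by
      rcases lt_or_gt_of_ne habne with h | h
      · exact h
      · exact absurd (eight_pos h36 ha hb h) (by intro hcon; apply h2; linarith)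
    exact iff_of_true rfl ⟨h9, by linarith [eight_neg' h36 ha hb habneg]⟩

lemma smul_vec (c x y : ℝ) : c • ![x, y] = ![c*x, c*y] := by
  funext i; fin_cases i <;> simp

lemma eta_vec (t : Fin 2 → ℝ) : ![t 0, t 1] = t := by
  funext i; fin_cases i <;> simp

lemma fiber0_eq : {x : RP 2 | x ∈ Sset ∧ Fc x = 0} = lineMap' '' Set.Icc (-2:ℝ) 2 := by
  ext x
  simp only [Set.mem_setOf_eq, Set.mem_image, Set.mem_Icc]
  constructor
  · rintro ⟨⟨t, rfl, hsp⟩, hF⟩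
    have h9 : p0 t := (cls_eq_zero_iff t).mp hF
    unfold p0 at h9
    have hsp' : pd (t.1 0) (t.1 1) ≤ 0 := hsp
    have h4 : (t.1 0)^2 ≤ 4*(t.1 1)^2 := by
      by_contra h
      push_neg at h
      have := mid16 hsp' h
      nlinarith [sq_nonneg (t.1 1)]
    have hb : t.1 1 ≠ 0 := by
      intro h0
      apply coords_ne t
      refine ⟨?_, h0⟩
      have h1 : (t.1 0)^2 ≤ 0 := by rw [h0] at h4; nlinarith
      have h2 : (t.1 0)^2 = 0 := le_antisymm h1 (sq_nonneg _)
      exact pow_eq_zero_iff (by norm_num) |>.mp h2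
    have hb2 : 0 < (t.1 1)^2 := by positivity
    have hr2 : (t.1 0 / t.1 1)^2 ≤ 4 := by
      rw [div_pow, div_le_iff₀ hb2]; linarith
    refine ⟨t.1 0 / t.1 1, ⟨?_, ?_⟩, ?_⟩
    · nlinarith [sq_nonneg (t.1 0 / t.1 1 + 2)]
    · nlinarith [sq_nonneg (t.1 0 / t.1 1 - 2)]
    · apply Quot.sound
      refine ⟨t.1 1, hb, ?_⟩
      show t.1 1 • ![t.1 0 / t.1 1, (1:ℝ)] = t.1
      rw [smul_vec, mul_one, mul_comm, div_mul_cancel₀ _ hb, eta_vec]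
  · rintro ⟨r, ⟨hr1, hr2⟩, rfl⟩
    have h4 : r^2 ≤ 4 := by nlinarith
    constructor
    · refine ⟨⟨![r, 1], vec_ne (by norm_num)⟩, rfl, ?_⟩
      show pd (![r, (1:ℝ)] 0) (![r, (1:ℝ)] 1) ≤ 0
      simp only [Matrix.cons_val_zero, Matrix.cons_val_one, Matrix.head_cons]
      unfold pd
      nlinarith [mul_nonneg (mul_nonneg (show (0:ℝ) ≤ 36 - r^2 by nlinarith)
        (show (0:ℝ) ≤ 16 - r^2 by nlinarith)) (show (0:ℝ) ≤ 4 - r^2 by nlinarith)]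
    · show cls ⟨![r, (1:ℝ)], vec_ne (by norm_num)⟩ = 0
      unfold cls
      rw [if_pos]
      simp only [Matrix.cons_val_zero, Matrix.cons_val_one, Matrix.head_cons]
      nlinarith

lemma fiber1_eq : {x : RP 2 | x ∈ Sset ∧ Fc x = 1} = lineMap '' Set.Icc (1/6:ℝ) (1/4) := by
  ext x
  simp only [Set.mem_setOf_eq, Set.mem_image, Set.mem_Icc]
  constructor
  · rintro ⟨⟨t, rfl, hsp⟩, hF⟩
    have hp1 : p1 t := (cls_eq_one_iff t hsp).mp hF
    obtain ⟨h9, hc2⟩ := hp1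
    obtain ⟨h16, h36, ha, hb⟩ := arc_facts (coords_ne t) hsp h9.le
    have ha2 : 0 < (t.1 0)^2 := by positivity
    have hab : 0 < t.1 0 * t.1 1 := by linarith
    have hs : 0 < t.1 1 / t.1 0 := by
      rw [show t.1 1 / t.1 0 = t.1 0 * t.1 1 / (t.1 0 * t.1 0) from by
        rw [mul_div_mul_left _ _ ha], ← pow_two]
      exact div_pos hab ha2
    have hs2a : (t.1 1 / t.1 0)^2 ≤ 1/16 := by
      rw [div_pow, div_le_iff₀ ha2]; linarith
    have hs2b : 1/36 ≤ (t.1 1 / t.1 0)^2 := by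
      rw [div_pow, le_div_iff₀ ha2]; linarith
    refine ⟨t.1 1 / t.1 0, ⟨?_, ?_⟩, ?_⟩
    · by_contra h
      push_neg at h
      nlinarith [mul_pos (show (0:ℝ) < 1/6 - t.1 1 / t.1 0 by linarith) hs]
    · nlinarith [sq_nonneg (t.1 1 / t.1 0 - 1/4)]
    · apply Quot.sound
      refine ⟨t.1 0, ha, ?_⟩
      show t.1 0 • ![(1:ℝ), t.1 1 / t.1 0] = t.1
      rw [smul_vec, mul_one, mul_comm, div_mul_cancel₀ _ ha, eta_vec]
  · rintro ⟨s, ⟨hs1, hs2⟩, rfl⟩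
    have h36 : 0 ≤ 36*s^2 - 1 := by
      nlinarith [mul_nonneg (show (0:ℝ) ≤ s - 1/6 by linarith) (show (0:ℝ) ≤ s + 1/6 by linarith)]
    have h16 : 0 ≤ 1 - 16*s^2 := by
      nlinarith [mul_nonneg (show (0:ℝ) ≤ 1/4 - s by linarith) (show (0:ℝ) ≤ 1/4 + s by linarith)]
    have h4 : 0 ≤ 1 - 4*s^2 := by linarith
    constructor
    · refine ⟨⟨![1, s], vec_ne (by norm_num)⟩, rfl, ?_⟩
      show pd (![(1:ℝ), s] 0) (![(1:ℝ), s] 1) ≤ 0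
      simp only [Matrix.cons_val_zero, Matrix.cons_val_one, Matrix.head_cons]
      unfold pd
      nlinarith [mul_nonneg (mul_nonneg h36 h16) h4]
    · show cls ⟨![(1:ℝ), s], vec_ne (by norm_num)⟩ = 1
      unfold cls
      rw [if_neg, if_pos]
      · simp only [Matrix.cons_val_zero, Matrix.cons_val_one, Matrix.head_cons]
        nlinarith
      · simp only [Matrix.cons_val_zero, Matrix.cons_val_one, Matrix.head_cons]
        intro h
        nlinarith

lemma fiber2_eq : {x : RP 2 | x ∈ Sset ∧ Fc x = 2} = lineMap '' Set.Icc (-(1/4):ℝ) (-(1/6)) := by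
  ext x
  simp only [Set.mem_setOf_eq, Set.mem_image, Set.mem_Icc]
  constructor
  · rintro ⟨⟨t, rfl, hsp⟩, hF⟩
    have hp2 : p2 t := (cls_eq_two_iff t hsp).mp hF
    obtain ⟨h9, hc2⟩ := hp2
    obtain ⟨h16, h36, ha, hb⟩ := arc_facts (coords_ne t) hsp h9.le
    have ha2 : 0 < (t.1 0)^2 := by positivity
    have hab : t.1 0 * t.1 1 < 0 := by nlinarith
    have hs : t.1 1 / t.1 0 < 0 := by
      rw [show t.1 1 / t.1 0 = t.1 0 * t.1 1 / (t.1 0 * t.1 0) from by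
        rw [mul_div_mul_left _ _ ha], ← pow_two]
      exact div_neg_of_neg_of_pos hab ha2
    have hs2a : (t.1 1 / t.1 0)^2 ≤ 1/16 := by
      rw [div_pow, div_le_iff₀ ha2]; linarith
    have hs2b : 1/36 ≤ (t.1 1 / t.1 0)^2 := by
      rw [div_pow, le_div_iff₀ ha2]; linarith
    refine ⟨t.1 1 / t.1 0, ⟨?_, ?_⟩, ?_⟩
    · nlinarith [sq_nonneg (t.1 1 / t.1 0 + 1/4)]
    · by_contra h
      push_neg at h
      nlinarith [mul_pos (show (0:ℝ) < t.1 1 / t.1 0 + 1/6 by linarith)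
        (show (0:ℝ) < -(t.1 1 / t.1 0) by linarith)]
    · apply Quot.sound
      refine ⟨t.1 0, ha, ?_⟩
      show t.1 0 • ![(1:ℝ), t.1 1 / t.1 0] = t.1
      rw [smul_vec, mul_one, mul_comm, div_mul_cancel₀ _ ha, eta_vec]
  · rintro ⟨s, ⟨hs1, hs2⟩, rfl⟩
    have h36 : 0 ≤ 36*s^2 - 1 := by
      nlinarith [mul_nonneg (show (0:ℝ) ≤ -s - 1/6 by linarith) (show (0:ℝ) ≤ -s + 1/6 by linarith)]
    have h16 : 0 ≤ 1 - 16*s^2 := by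
      nlinarith [mul_nonneg (show (0:ℝ) ≤ 1/4 + s by linarith) (show (0:ℝ) ≤ 1/4 - s by linarith)]
    have h4 : 0 ≤ 1 - 4*s^2 := by linarith
    constructor
    · refine ⟨⟨![1, s], vec_ne (by norm_num)⟩, rfl, ?_⟩
      show pd (![(1:ℝ), s] 0) (![(1:ℝ), s] 1) ≤ 0
      simp only [Matrix.cons_val_zero, Matrix.cons_val_one, Matrix.head_cons]
      unfold pd
      nlinarith [mul_nonneg (mul_nonneg h36 h16) h4]
    · show cls ⟨![(1:ℝ), s], vec_ne (by norm_num)⟩ = 2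
      unfold cls
      rw [if_neg, if_neg]
      · simp only [Matrix.cons_val_zero, Matrix.cons_val_one, Matrix.head_cons]
        intro h
        nlinarith
      · simp only [Matrix.cons_val_zero, Matrix.cons_val_one, Matrix.head_cons]
        intro h
        nlinarith

lemma fc_iff0 {x : RP 2} (hx : x ∈ Sset) : Fc x = 0 ↔ x ∈ U0 := by
  obtain ⟨t, rfl, hsp⟩ := hx
  exact cls_eq_zero_iff t

lemma fc_iff1 {x : RP 2} (hx : x ∈ Sset) : Fc x = 1 ↔ x ∈ U1 := by
  obtain ⟨t, rfl, hsp⟩ := hx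
  exact cls_eq_one_iff t hsp

lemma fc_iff2 {x : RP 2} (hx : x ∈ Sset) : Fc x = 2 ↔ x ∈ U2 := by
  obtain ⟨t, rfl, hsp⟩ := hx
  exact cls_eq_two_iff t hsp

end ThreeOvals

open ThreeOvals in
/-- For the quadrics of the three-ovals example, the image `S₁ ⊆ ℝP¹` of the real points of
the quadric surface bundle `π₁ : Y → ℙ¹` has exactly three connected components;
consequently `Y(ℝ)` has exactly three connected components (here the real isotopy class of
the discriminant quartic `Δ` is three ovals). -/
theorem three_ovals_example_three_components
    (S₁ : Set (RP 2))
    (hS₁ : S₁ = {x | ∃ t : {x : Fin 2 → ℝ // x ≠ 0}, Quot.mk (projRel 2) t = x ∧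
      ∃ u v w : ℝ, (u, v, w) ≠ (0, 0, 0) ∧
        0 ≤ (t : Fin 2 → ℝ) 0 ^ 2 * Q₁ u v w
          + 2 * (t : Fin 2 → ℝ) 0 * (t : Fin 2 → ℝ) 1 * Q₂ u v w
          + (t : Fin 2 → ℝ) 1 ^ 2 * Q₃ u v w}) :
    Nonempty (ConnectedComponents ↥S₁ ≃ Fin 3) := by
  classical
  have hS : S₁ = Sset := by
    rw [hS₁]
    ext x
    constructor
    · rintro ⟨t, rfl, hw⟩
      exact ⟨t, rfl, (exists_iff (coords_ne t)).mp hw⟩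
    · rintro ⟨t, rfl, hsp⟩
      exact ⟨t, rfl, (exists_iff (coords_ne t)).mpr hsp⟩
  subst hS
  set f : ↥Sset → Fin 3 := fun x => Fc x.1 with hf_def
  -- continuity of the classifying map
  have hfib0 : f ⁻¹' {0} = Subtype.val ⁻¹' U0 := by
    ext x
    simp only [Set.mem_preimage, Set.mem_singleton_iff, hf_def]
    exact fc_iff0 x.2
  have hfib1 : f ⁻¹' {1} = Subtype.val ⁻¹' U1 := by
    ext x
    simp only [Set.mem_preimage, Set.mem_singleton_iff, hf_def]
    exact fc_iff1 x.2
  have hfib2 : f ⁻¹' {2} = Subtype.val ⁻¹' U2 := by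
    ext x
    simp only [Set.mem_preimage, Set.mem_singleton_iff, hf_def]
    exact fc_iff2 x.2
  have hcont : Continuous f := by
    rw [continuous_discrete_rng]
    intro i
    fin_cases i
    · show IsOpen (f ⁻¹' {(0 : Fin 3)})
      rw [hfib0]; exact isOpen_U0.preimage continuous_subtype_val
    · show IsOpen (f ⁻¹' {(1 : Fin 3)})
      rw [hfib1]; exact isOpen_U1.preimage continuous_subtype_val
    · show IsOpen (f ⁻¹' {(2 : Fin 3)})
      rw [hfib2]; exact isOpen_U2.preimage continuous_subtype_val
  -- fibers are connected
  have himg : ∀ i : Fin 3, Subtype.val '' (f ⁻¹' {i}) = {x : RP 2 | x ∈ Sset ∧ Fc x = i} := by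
    intro i
    ext y
    simp only [Set.mem_image, Set.mem_preimage, Set.mem_singleton_iff, Set.mem_setOf_eq]
    constructor
    · rintro ⟨⟨y', hy'⟩, h1, rfl⟩
      exact ⟨hy', h1⟩
    · rintro ⟨hy, h1⟩
      exact ⟨⟨y, hy⟩, h1, rfl⟩
  have hpre : ∀ i : Fin 3, IsPreconnected (f ⁻¹' {i}) := by
    intro i
    apply Topology.IsInducing.subtypeVal.isPreconnected_image.mp
    rw [himg i]
    fin_cases i
    · show IsPreconnected {x : RP 2 | x ∈ Sset ∧ Fc x = (0 : Fin 3)}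
      rw [show {x : RP 2 | x ∈ Sset ∧ Fc x = (0 : Fin 3)} = lineMap' '' Set.Icc (-2:ℝ) 2 from
        fiber0_eq]
      exact isPreconnected_Icc.image _ cont_lineMap'.continuousOn
    · show IsPreconnected {x : RP 2 | x ∈ Sset ∧ Fc x = (1 : Fin 3)}
      rw [show {x : RP 2 | x ∈ Sset ∧ Fc x = (1 : Fin 3)} = lineMap '' Set.Icc (1/6:ℝ) (1/4) from
        fiber1_eq]
      exact isPreconnected_Icc.image _ cont_lineMap.continuousOn
    · show IsPreconnected {x : RP 2 | x ∈ Sset ∧ Fc x = (2 : Fin 3)}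
      rw [show {x : RP 2 | x ∈ Sset ∧ Fc x = (2 : Fin 3)}
          = lineMap '' Set.Icc (-(1/4):ℝ) (-(1/6)) from fiber2_eq]
      exact isPreconnected_Icc.image _ cont_lineMap.continuousOn
  -- representative points
  have hA : lineMap' 1 ∈ {x : RP 2 | x ∈ Sset ∧ Fc x = 0} := by
    rw [fiber0_eq]
    exact ⟨1, Set.mem_Icc.mpr (by norm_num), rfl⟩
  have hB : lineMap (1/5) ∈ {x : RP 2 | x ∈ Sset ∧ Fc x = 1} := by
    rw [fiber1_eq]
    exact ⟨1/5, Set.mem_Icc.mpr (by norm_num), rfl⟩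
  have hC : lineMap (-(1/5)) ∈ {x : RP 2 | x ∈ Sset ∧ Fc x = 2} := by
    rw [fiber2_eq]
    exact ⟨-(1/5), Set.mem_Icc.mpr (by norm_num), rfl⟩
  refine ⟨Equiv.ofBijective hcont.connectedComponentsLift ⟨?_, ?_⟩⟩
  · intro c1 c2 h12
    obtain ⟨x, rfl⟩ := ConnectedComponents.surjective_coe c1
    obtain ⟨y, rfl⟩ := ConnectedComponents.surjective_coe c2
    rw [hcont.connectedComponentsLift_apply_coe, hcont.connectedComponentsLift_apply_coe] at h12
    rw [ConnectedComponents.coe_eq_coe]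
    have hx : x ∈ f ⁻¹' {f y} := by simp [h12]
    have hy : y ∈ f ⁻¹' {f y} := by simp
    exact connectedComponent_eq ((hpre (f y)).subset_connectedComponent hx hy)
  · intro i
    fin_cases i
    · refine ⟨(⟨lineMap' 1, hA.1⟩ : ↥Sset), ?_⟩
      rw [hcont.connectedComponentsLift_apply_coe]
      exact hA.2
    · refine ⟨(⟨lineMap (1/5), hB.1⟩ : ↥Sset), ?_⟩
      rw [hcont.connectedComponentsLift_apply_coe]
      exact hB.2
    · refine ⟨(⟨lineMap (-(1/5)), hC.1⟩ : ↥Sset), ?_⟩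
      rw [hcont.connectedComponentsLift_apply_coe]
      exact hC.2
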